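/- If B = S Wᵀ with S ∈ {±1}^{n×r} Schur independent and W ∈ R^{m×r} of full column rank, then rank(B) = r, and consequently any sign component decomposition of B has inner dimension at least r. -/

import Mathlib

open Matrix

/-- Schur independence of a family of sign vectors. -/
def SchurIndep {n r : ℕ} (s : Fin r → (Fin n → ℝ)) : Prop :=
  LinearIndependent ℝ (fun p : Option {p : Fin r × Fin r // p.1 < p.2} =>
    p.elim (fun _ => (1 : ℝ)) (fun q => s q.1.1 * s q.1.2))

lemma sq_sum_aux {r : ℕ} (a : Fin r → ℝ) :
    (∑ j, a j) ^ 2 = (∑ j, a j ^ 2) +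
      2 * ∑ p : {p : Fin r × Fin r // p.1 < p.2}, a p.1.1 * a p.1.2 := by
  classical
  have h0 : (∑ j, a j) ^ 2 = ∑ p ∈ Finset.univ ×ˢ Finset.univ, a p.1 * a p.2 := by
    rw [sq, Finset.sum_mul_sum, ← Finset.sum_product']
  rw [h0, ← Finset.diag_union_offDiag,
    Finset.sum_union (Finset.disjoint_diag_offDiag _), Finset.sum_diag]
  congr 1
  · exact Finset.sum_congr rfl fun j _ => (sq (a j)).symm
  · rw [← Finset.sum_filter_add_sum_filter_not (Finset.univ.offDiag)
      (fun p : Fin r × Fin r => p.1 < p.2)]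
    have hswap : ∑ p ∈ Finset.univ.offDiag.filter (fun p : Fin r × Fin r => ¬ p.1 < p.2),
        a p.1 * a p.2
        = ∑ p ∈ Finset.univ.offDiag.filter (fun p : Fin r × Fin r => p.1 < p.2),
        a p.1 * a p.2 := by
      apply Finset.sum_nbij' (fun p => Prod.swap p) (fun p => Prod.swap p)
      · intro p hp
        simp only [Finset.mem_filter, Finset.mem_offDiag, Finset.mem_univ, true_and] at hp ⊢
        obtain ⟨hne, hnlt⟩ := hp
        exact ⟨Ne.symm hne, lt_of_le_of_ne (not_lt.mp hnlt) (Ne.symm hne)⟩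
      · intro p hp
        simp only [Finset.mem_filter, Finset.mem_offDiag, Finset.mem_univ, true_and] at hp ⊢
        obtain ⟨hne, hlt⟩ := hp
        exact ⟨hlt.ne', not_lt.mpr hlt.le⟩
      · intro p _; exact Prod.swap_swap p
      · intro p _; exact Prod.swap_swap p
      · intro p _; exact mul_comm _ _
    rw [hswap, ← two_mul]
    congr 1
    rw [← Finset.sum_subtype (p := fun p : Fin r × Fin r => p.1 < p.2)
      (Finset.univ.offDiag.filter (fun p : Fin r × Fin r => p.1 < p.2))
      (fun p => by
        simp only [Finset.mem_filter, Finset.mem_offDiag, Finset.mem_univ, true_and]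
        exact ⟨fun h => h.2, fun h => ⟨h.ne, h⟩⟩)
      (fun p => a p.1 * a p.2)]

lemma cols_indep_of_schurIndep {n r : ℕ} (S : Matrix (Fin n) (Fin r) ℝ)
    (hS : ∀ i j, S i j = 1 ∨ S i j = -1)
    (hSchur : SchurIndep (fun j i => S i j)) :
    LinearIndependent ℝ (fun j : Fin r => Sᵀ j) := by
  rw [Fintype.linearIndependent_iff]
  intro c hc j
  rw [SchurIndep, Fintype.linearIndependent_iff] at hSchur
  -- build coefficients for the Schur family
  set g : Option {p : Fin r × Fin r // p.1 < p.2} → ℝ :=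
    fun p => p.elim (∑ k, c k ^ 2) (fun q => 2 * (c q.1.1 * c q.1.2)) with hg
  have key : ∀ p, g p = 0 := by
    apply hSchur
    ext i
    have hci : (∑ k, c k * S i k) = 0 := by
      have := congr_fun hc i
      simpa [Matrix.transpose_apply] using this
    have hsq := sq_sum_aux (fun k => c k * S i k)
    rw [hci] at hsq
    simp only [mul_pow] at hsq
    have hdiag : (∑ k, c k ^ 2 * S i k ^ 2) = ∑ k, c k ^ 2 := by
      apply Finset.sum_congr rfl
      intro k _
      rcases hS i k with h | h <;> rw [h] <;> ring
    rw [hdiag] at hsq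
    simp only [Finset.sum_apply, Pi.smul_apply, smul_eq_mul]
    rw [Fintype.sum_option]
    simp only [hg, Option.elim, Pi.zero_apply]
    have : (∑ k, c k ^ 2) * 1 +
        ∑ q : {p : Fin r × Fin r // p.1 < p.2},
          2 * (c q.1.1 * c q.1.2) * (S i q.1.1 * S i q.1.2) = 0 := by
      rw [mul_one]
      have : ∑ q : {p : Fin r × Fin r // p.1 < p.2},
          2 * (c q.1.1 * c q.1.2) * (S i q.1.1 * S i q.1.2)
          = 2 * ∑ q : {p : Fin r × Fin r // p.1 < p.2},
            (c q.1.1 * S i q.1.1) * (c q.1.2 * S i q.1.2) := by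
        rw [Finset.mul_sum]
        apply Finset.sum_congr rfl
        intro q _; ring
      rw [this]
      linarith [hsq]
    convert this using 2
    simp only [Pi.mul_apply]
  have hnone := key none
  simp only [hg, Option.elim] at hnone
  have hj : c j ^ 2 = 0 := by
    have hnonneg : ∀ k ∈ Finset.univ, (0:ℝ) ≤ c k ^ 2 := fun k _ => sq_nonneg _
    exact (Finset.sum_eq_zero_iff_of_nonneg hnonneg).mp hnone j (Finset.mem_univ j)
  exact pow_eq_zero_iff (Nat.succ_ne_zero 1) |>.mp hj

/-- If `B = S Wᵀ` with `S` Schur independent and `W` of full column rank,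
then `rank B = r` and every sign component decomposition of `B` has inner dimension
at least `r`. -/
theorem rank_of_sign_component_decomposition {n m r : ℕ}
    (S : Matrix (Fin n) (Fin r) ℝ) (W : Matrix (Fin m) (Fin r) ℝ)
    (hS : ∀ i j, S i j = 1 ∨ S i j = -1)
    (hSchur : SchurIndep (fun j i => S i j))
    (hW : W.rank = r) :
    (S * Wᵀ).rank = r ∧
      ∀ (r' : ℕ) (S' : Matrix (Fin n) (Fin r') ℝ) (W' : Matrix (Fin m) (Fin r') ℝ),
        (∀ i j, S' i j = 1 ∨ S' i j = -1) → S * Wᵀ = S' * W'ᵀ → r ≤ r' := by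
  have hcols := cols_indep_of_schurIndep S hS hSchur
  have hSinj : Function.Injective S.mulVec := Matrix.mulVec_injective_iff.mpr hcols
  have hrank : (S * Wᵀ).rank = r := by
    have hWt : (Wᵀ).rank = r := by rw [Matrix.rank_transpose]; exact hW
    rw [Matrix.rank, Matrix.mulVecLin_mul, LinearMap.range_comp]
    have hinjlin : Function.Injective S.mulVecLin := by
      exact hSinj
    rw [← (Submodule.equivMapOfInjective S.mulVecLin hinjlin
      (LinearMap.range (Wᵀ).mulVecLin)).finrank_eq]
    exact hWt
  refine ⟨hrank, fun r' S' W' _ hEq => ?_⟩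
  calc r = (S * Wᵀ).rank := hrank.symm
    _ = (S' * W'ᵀ).rank := by rw [hEq]
    _ ≤ _ := by
        refine le_trans (Matrix.rank_mul_le_left _ _) ?_
        simpa using Matrix.rank_le_width S'
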